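/- Normal cone intersection rule: Let Ω₁, Ω₂ be convex subsets of a normed space X and x̄ ∈ Ω₁ ∩ Ω₂. Suppose there exists a bounded convex neighborhood V of x̄ such that 0 ∈ int(Ω₁ − (Ω₂ ∩ V)). Then N(x̄; Ω₁ ∩ Ω₂) = N(x̄; Ω₁) + N(x̄; Ω₂). -/

import Mathlib

open Pointwise

private lemma le_on_convex_of_lt_on_interior {E : Type*} [AddCommGroup E] [Module ℝ E]
    [TopologicalSpace E] [IsTopologicalAddGroup E] [ContinuousSMul ℝ E]
    {C : Set E} (hC : Convex ℝ C) {y₀ : E} (hy : y₀ ∈ interior C)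
    (F : E →L[ℝ] ℝ) {u : ℝ} (h : ∀ q ∈ interior C, F q < u) {p : E} (hp : p ∈ C) :
    F p ≤ u := by
  have key : ∀ t : ℝ, 0 < t → t ≤ 1 → F ((1 - t) • p + t • y₀) < u := fun t ht ht1 =>
    h _ (hC.combo_self_interior_mem_interior hp hy (by linarith) ht (by ring))
  have hcont : Continuous fun t : ℝ => F ((1 - t) • p + t • y₀) := by fun_prop
  have htend : Filter.Tendsto (fun t : ℝ => F ((1 - t) • p + t • y₀))
      (nhdsWithin 0 (Set.Ioi 0)) (nhds (F p)) := by
    have := hcont.tendsto 0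
    simp only [sub_zero, one_smul, zero_smul, add_zero] at this
    exact this.mono_left nhdsWithin_le_nhds
  refine le_of_tendsto htend ?_
  filter_upwards [Ioc_mem_nhdsGT_of_mem (by norm_num : (0:ℝ) ∈ Set.Ico (0:ℝ) 1)] with t ht
  exact (key t ht.1 ht.2).le

set_option maxHeartbeats 2000000 in
theorem normal_cone_intersection_rule {X : Type*} [NormedAddCommGroup X]
    [NormedSpace ℝ X] (Ω₁ Ω₂ : Set X) (hc₁ : Convex ℝ Ω₁) (hc₂ : Convex ℝ Ω₂)
    (xb : X) (hxb : xb ∈ Ω₁ ∩ Ω₂)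
    (V : Set X) (hV : V ∈ nhds xb) (hVconv : Convex ℝ V)
    (hVbdd : Bornology.IsBounded V)
    (hqc : (0 : X) ∈ interior (Ω₁ - Ω₂ ∩ V)) :
    {f : X →L[ℝ] ℝ | ∀ x ∈ Ω₁ ∩ Ω₂, f (x - xb) ≤ 0} =
      {f : X →L[ℝ] ℝ | ∀ x ∈ Ω₁, f (x - xb) ≤ 0} +
        {f : X →L[ℝ] ℝ | ∀ x ∈ Ω₂, f (x - xb) ≤ 0} := by
  ext φ
  simp only [Set.mem_setOf_eq, Set.mem_add]
  constructor
  · intro hφ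
    have hxbV : xb ∈ V := mem_of_mem_nhds hV
    obtain ⟨M, hM⟩ : ∃ M, ∀ v ∈ V, ‖v‖ ≤ M := isBounded_iff_forall_norm_le.mp hVbdd
    have hM0 : 0 ≤ M := le_trans (norm_nonneg xb) (hM xb hxbV)
    -- the auxiliary convex set in X × ℝ
    set C : Set (X × ℝ) :=
      {p | ∃ u ∈ Ω₁, ∃ v ∈ Ω₂ ∩ V, p.1 = u - v ∧ p.2 ≤ φ (u - xb)} with hCdef
    have hCconv : Convex ℝ C := by
      rintro p ⟨u₁, hu₁, v₁, hv₁, hp1, hp2⟩ q ⟨u₂, hu₂, v₂, hv₂, hq1, hq2⟩ a b ha hb hab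
      refine ⟨a • u₁ + b • u₂, hc₁ hu₁ hu₂ ha hb hab,
        a • v₁ + b • v₂, ⟨hc₂ hv₁.1 hv₂.1 ha hb hab, hVconv hv₁.2 hv₂.2 ha hb hab⟩, ?_, ?_⟩
      · show a • p.1 + b • q.1 = _
        rw [hp1, hq1]
        module
      · show a • p.2 + b • q.2 ≤ _
        have key : φ (a • u₁ + b • u₂ - xb) = a * φ (u₁ - xb) + b * φ (u₂ - xb) := by
          have hb' : b = 1 - a := by linarith
          subst hb'
          have h1 : a • u₁ + (1 - a) • u₂ - xb = a • (u₁ - xb) + (1 - a) • (u₂ - xb) := by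
            module
          rw [h1, map_add, map_smul, map_smul, smul_eq_mul, smul_eq_mul]
        rw [key]
        exact add_le_add (mul_le_mul_of_nonneg_left hp2 ha) (mul_le_mul_of_nonneg_left hq2 hb)
    -- an open box inside C
    set K : ℝ := ‖φ‖ * (1 + M + ‖xb‖) with hKdef
    have hK0 : 0 ≤ K := mul_nonneg (norm_nonneg _) (by linarith [norm_nonneg xb])
    set O : Set X := interior (Ω₁ - Ω₂ ∩ V) ∩ Metric.ball 0 1 with hOdef
    have hOopen : IsOpen O := isOpen_interior.inter Metric.isOpen_ball
    have hO0 : (0 : X) ∈ O := ⟨hqc, by simp⟩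
    have hbox : O ×ˢ Set.Iio (-K) ⊆ C := by
      rintro ⟨w, l⟩ ⟨hw, hl⟩
      obtain ⟨u, hu, v, hv, huv⟩ := Set.mem_sub.mp (interior_subset hw.1)
      refine ⟨u, hu, v, hv, huv.symm, ?_⟩
      have huv2 : u - v = w := huv
      have h1 : ‖u - xb‖ ≤ 1 + M + ‖xb‖ := by
        have : u = w + v := by rw [← huv2]; abel
        rw [this]
        calc ‖w + v - xb‖ ≤ ‖w‖ + ‖v‖ + ‖xb‖ := by
              exact (norm_sub_le _ _).trans (by gcongr; exact norm_add_le _ _)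
          _ ≤ 1 + M + ‖xb‖ := by
              have hw1 : ‖w‖ ≤ 1 := le_of_lt (by simpa using hw.2)
              have := hM v hv.2
              linarith
      have h2 : -K ≤ φ (u - xb) := by
        have habs : |φ (u - xb)| ≤ ‖φ‖ * ‖u - xb‖ := φ.le_opNorm (u - xb)
        have h3 : ‖φ‖ * ‖u - xb‖ ≤ K := by
          rw [hKdef]; exact mul_le_mul_of_nonneg_left h1 (norm_nonneg φ)
        have := (abs_le.mp habs).1
        linarith
      have hlK : l < -K := by simpa using hl
      linarith
    have hboxint : O ×ˢ Set.Iio (-K) ⊆ interior C :=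
      interior_maximal hbox (hOopen.prod isOpen_Iio)
    have hy₀ : ((0 : X), -K - 1) ∈ interior C :=
      hboxint ⟨hO0, by simp⟩
    -- the positive vertical ray
    set T : Set (X × ℝ) := {(0 : X)} ×ˢ Set.Ioi (0 : ℝ) with hTdef
    have hTconv : Convex ℝ T := (convex_singleton _).prod (convex_Ioi 0)
    have hdisj : Disjoint (interior C) T := by
      rw [Set.disjoint_left]
      rintro ⟨w, l⟩ hint ⟨hw0, hl0⟩
      obtain ⟨u, hu, v, hv, huv, hle⟩ := interior_subset hint
      simp only [Set.mem_singleton_iff] at hw0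
      have huv' : u = v := by
        have : u - v = 0 := by rw [← huv, hw0]
        exact sub_eq_zero.mp this
      have : φ (u - xb) ≤ 0 := hφ u ⟨hu, huv' ▸ hv.1⟩
      have hl0' : (0:ℝ) < l := hl0
      simp only at hle
      linarith
    obtain ⟨F, u, hFlt, hFge⟩ :=
      geometric_hahn_banach_open (hCconv.interior) isOpen_interior hTconv hdisj
    set g : X →L[ℝ] ℝ := F.comp (ContinuousLinearMap.inl ℝ X ℝ) with hgdef
    set β : ℝ := F ((0 : X), (1 : ℝ)) with hβdef
    have hF : ∀ (x : X) (l : ℝ), F (x, l) = g x + l * β := by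
      intro x l
      have hsplit : ((x, l) : X × ℝ) = ((x, 0) : X × ℝ) + l • ((0 : X), (1 : ℝ)) := by
        simp [Prod.ext_iff]
      rw [hsplit, map_add, map_smul, smul_eq_mul]
      simp [hgdef]
      exact Or.inl rfl
    -- u ≤ 0
    have hu0 : u ≤ 0 := by
      by_contra hpos
      push_neg at hpos
      have h1 : ∀ t : ℝ, 0 < t → u ≤ t * β := by
        intro t ht
        have := hFge ((0 : X), t) ⟨rfl, ht⟩
        rwa [hF, map_zero, zero_add] at this
      rcases le_or_gt β 0 with hβ | hβ
      · have := h1 1 one_pos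
        nlinarith
      · have := h1 (u / (2 * β)) (by positivity)
        have hc : u / (2 * β) * β = u / 2 := by field_simp
        rw [hc] at this
        linarith
    -- F ≤ u on C
    have hCle : ∀ p ∈ C, F p ≤ u :=
      fun p hp => le_on_convex_of_lt_on_interior hCconv hy₀ F hFlt hp
    -- β > 0
    have hβpos : 0 < β := by
      have h1 : F ((0 : X), -K - 1) < u := hFlt _ hy₀
      rw [hF, map_zero, zero_add] at h1
      nlinarith
    -- define the decomposition
    set ψ : X →L[ℝ] ℝ := β⁻¹ • g with hψdef
    have hψapp : ∀ z : X, ψ z = β⁻¹ * g z := fun z => rfl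
    refine ⟨φ + ψ, ?_, -ψ, ?_, ?_⟩
    · intro x hx
      have hpC : ((x - xb, φ (x - xb)) : X × ℝ) ∈ C :=
        ⟨x, hx, xb, ⟨hxb.2, hxbV⟩, rfl, le_refl _⟩
      have h1 : g (x - xb) + φ (x - xb) * β ≤ u := by
        have := hCle _ hpC
        rwa [hF] at this
      have h2 : g (x - xb) + φ (x - xb) * β ≤ 0 := le_trans h1 hu0
      have h3 : β⁻¹ * (g (x - xb) + φ (x - xb) * β) ≤ 0 :=
        mul_nonpos_of_nonneg_of_nonpos (inv_nonneg.mpr hβpos.le) h2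
      have h4 : β⁻¹ * (g (x - xb) + φ (x - xb) * β) = β⁻¹ * g (x - xb) + φ (x - xb) := by
        field_simp
      rw [h4] at h3
      simp only [ContinuousLinearMap.add_apply, hψapp]
      linarith
    · -- -ψ ∈ N(xb; Ω₂), i.e. 0 ≤ g (x - xb) for x ∈ Ω₂
      have hkey : ∀ v ∈ Ω₂ ∩ V, 0 ≤ g (v - xb) := by
        intro v hv
        have hpC : ((xb - v, (0 : ℝ)) : X × ℝ) ∈ C :=
          ⟨xb, hxb.1, v, hv, rfl, by simp⟩
        have h1 : g (xb - v) + 0 * β ≤ u := by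
          have := hCle _ hpC
          rwa [hF] at this
        have h2 : g (xb - v) ≤ 0 := by linarith
        have h3 : g (xb - v) = -g (v - xb) := by
          rw [← map_neg]; congr 1; abel
        rw [h3] at h2
        linarith
      intro x hx
      have hgoal : 0 ≤ g (x - xb) := by
        rcases eq_or_ne x xb with rfl | hne
        · simp
        · obtain ⟨ε, hε, hball⟩ := Metric.mem_nhds_iff.mp hV
          have hnorm : 0 < ‖x - xb‖ := by
            rw [norm_pos_iff]
            exact sub_ne_zero.mpr hne
          set t : ℝ := min 1 (ε / (2 * ‖x - xb‖)) with htdef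
          have ht0 : 0 < t := lt_min one_pos (by positivity)
          have ht1 : t ≤ 1 := min_le_left _ _
          set v : X := xb + t • (x - xb) with hvdef
          have hvΩ : v ∈ Ω₂ := by
            have := hc₂ hxb.2 hx (by linarith : (0:ℝ) ≤ 1 - t) ht0.le (by ring)
            convert this using 1
            module
          have hvV : v ∈ V := by
            apply hball
            have : dist v xb = t * ‖x - xb‖ := by
              rw [dist_eq_norm]
              simp [hvdef, norm_smul, abs_of_pos ht0]
            rw [Metric.mem_ball, this]
            have htle : t ≤ ε / (2 * ‖x - xb‖) := min_le_right _ _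
            have : t * ‖x - xb‖ ≤ ε / 2 := by
              calc t * ‖x - xb‖ ≤ ε / (2 * ‖x - xb‖) * ‖x - xb‖ :=
                    mul_le_mul_of_nonneg_right (min_le_right _ _) (norm_nonneg _)
                _ = ε / 2 := by field_simp
            linarith
          have := hkey v ⟨hvΩ, hvV⟩
          have hveq : v - xb = t • (x - xb) := by simp [hvdef]
          rw [hveq, map_smul, smul_eq_mul] at this
          nlinarith
      simp only [ContinuousLinearMap.neg_apply, hψapp]
      have : 0 ≤ β⁻¹ * g (x - xb) := mul_nonneg (inv_nonneg.mpr hβpos.le) hgoal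
      linarith
    · abel
  · rintro ⟨f₁, hf₁, f₂, hf₂, rfl⟩ x hx
    simp only [ContinuousLinearMap.add_apply]
    exact add_nonpos (hf₁ x hx.1) (hf₂ x hx.2)
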